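/- Let h_CD, h_CB, h_SC, h_SB, p_S, σ_B², σ_C², σ_D² > 0, β ≥ 0, λ ∈ [0,1], and R̃_B ≥ 0. Define R_{CD,S}(x) = log₂(1 − (1 − 2^{−R̃_B})·h_CD·(p_S·h_SB + σ_B²)/(h_CB·σ_D²) + (2^{−R̃_B}·h_CD/σ_D²)·x) and R_{SC}(x) = log₂(1 + p_S·h_SC/(β·x^λ + σ_C²)). Then the function F(x) = R_{CD,S}(x) − R_{SC}(x) is strictly increasing on the set of x > 0 where the argument of the first logarithm is positive; consequently the equation R_{CD,S}(x) = R_{SC}(x) has at most one solution on that set. -/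
import Mathlib


open Set Real

/-- `F = R_{CD,S} - R_{SC}` is strictly increasing on the set of positive
`x` where the argument of the first logarithm is positive, hence
`R_{CD,S}(x) = R_{SC}(x)` has at most one solution there. -/
theorem rate_difference_strictMono_and_unique_crossing
    (hCD hCB hSC hSB pS σB2 σC2 σD2 β lam RB : ℝ)
    (hhCD : 0 < hCD) (hhCB : 0 < hCB) (hhSC : 0 < hSC) (hhSB : 0 < hSB)
    (hpS : 0 < pS) (hσB : 0 < σB2) (hσC : 0 < σC2) (hσD : 0 < σD2)
    (hβ : 0 ≤ β) (hlam : lam ∈ Icc (0 : ℝ) 1) (hRB : 0 ≤ RB) :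
    let RCDS : ℝ → ℝ := fun x =>
      logb 2 (1 - (1 - (2 : ℝ) ^ (-RB)) * hCD * (pS * hSB + σB2) / (hCB * σD2)
        + ((2 : ℝ) ^ (-RB) * hCD / σD2) * x)
    let RSC : ℝ → ℝ := fun x => logb 2 (1 + pS * hSC / (β * x ^ lam + σC2))
    let S : Set ℝ := {x | 0 < x ∧
      0 < 1 - (1 - (2 : ℝ) ^ (-RB)) * hCD * (pS * hSB + σB2) / (hCB * σD2)
        + ((2 : ℝ) ^ (-RB) * hCD / σD2) * x}
    StrictMonoOn (fun x => RCDS x - RSC x) S ∧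
      {x ∈ S | RCDS x = RSC x}.Subsingleton := by
  intro RCDS RSC S
  have hpow : (0:ℝ) < (2:ℝ) ^ (-RB) := Real.rpow_pos_of_pos (by norm_num) _
  have hslope : 0 < (2:ℝ) ^ (-RB) * hCD / σD2 := by positivity
  have hmono : StrictMonoOn (fun x => RCDS x - RSC x) S := by
    intro x hx y hy hxy
    obtain ⟨hx0, hx1⟩ := hx
    obtain ⟨hy0, hy1⟩ := hy
    have h1 : RCDS x < RCDS y := by
      apply Real.logb_lt_logb (by norm_num) hx1
      have : ((2:ℝ) ^ (-RB) * hCD / σD2) * x < ((2:ℝ) ^ (-RB) * hCD / σD2) * y :=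
        mul_lt_mul_of_pos_left hxy hslope
      linarith
    have h2 : RSC y ≤ RSC x := by
      have hxl : (0:ℝ) ≤ x ^ lam := Real.rpow_nonneg hx0.le _
      have hyl : x ^ lam ≤ y ^ lam :=
        Real.rpow_le_rpow hx0.le hxy.le hlam.1
      have hdx : 0 < β * x ^ lam + σC2 := by positivity
      have hdy : 0 < β * y ^ lam + σC2 := by nlinarith
      have hfrac : pS * hSC / (β * y ^ lam + σC2) ≤ pS * hSC / (β * x ^ lam + σC2) := by
        apply div_le_div_of_nonneg_left (by positivity) hdx
        nlinarith
      exact Real.logb_le_logb_of_le (by norm_num) (by positivity) (by linarith)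
    simp only
    linarith
  refine ⟨hmono, ?_⟩
  intro x hx y hy
  have := hmono.injOn hx.1 hy.1
  apply this
  show RCDS x - RSC x = RCDS y - RSC y
  rw [hx.2, hy.2]
  ring
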